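/- Let K > 0. There is a constant A > 0 depending only on K such that the following holds for all integers n and N with n > 2(K+1)², 2 ≤ N ≤ n, and N³ ≤ n. Let φ_{ab} ∈ [0,π] (1 ≤ a < b ≤ N) be angles, define unit vectors u₁,…,u_N ∈ ℝ^n by (u_i)_k = cos(φ_{ki})·∏_{m=1}^{k−1} sin(φ_{mi}) for 1 ≤ k ≤ i−1, (u_i)_i = ∏_{m=1}^{i−1} sin(φ_{mi}), and (u_i)_k = 0 for k > i, and set t_{ij} = √n·(φ_{ij} − π/2) and α̃_{ij} = √n·(arccos(u_i·u_j) − π/2) for 1 ≤ i < j ≤ N. If |t_{ij}| ≤ K + 1 for all 1 ≤ i < j ≤ N, then |t_{ij} − α̃_{ij}| ≤ A·N/√n for all 1 ≤ i < j ≤ N. -/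
import Mathlib


open Real Finset

lemma prod_lower_aux (s : Finset ℕ) (f : ℕ → ℝ) (ε : ℝ) (hε : 0 ≤ ε)
    (h0 : ∀ m ∈ s, 0 ≤ f m) (h1 : ∀ m ∈ s, f m ≤ 1) (h2 : ∀ m ∈ s, 1 - ε ≤ f m) :
    1 - s.card * ε ≤ ∏ m ∈ s, f m := by
  classical
  induction s using Finset.induction_on with
  | empty => simp
  | @insert a s ha ih =>
    rw [Finset.prod_insert ha, Finset.card_insert_of_notMem ha]
    have hprod : 1 - s.card * ε ≤ ∏ m ∈ s, f m :=
      ih (fun m hm => h0 m (Finset.mem_insert_of_mem hm))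
        (fun m hm => h1 m (Finset.mem_insert_of_mem hm))
        (fun m hm => h2 m (Finset.mem_insert_of_mem hm))
    have hple : (∏ m ∈ s, f m) ≤ 1 :=
      Finset.prod_le_one (fun m hm => h0 m (Finset.mem_insert_of_mem hm))
        (fun m hm => h1 m (Finset.mem_insert_of_mem hm))
    have hpnn : 0 ≤ ∏ m ∈ s, f m :=
      Finset.prod_nonneg (fun m hm => h0 m (Finset.mem_insert_of_mem hm))
    have hfa : 1 - ε ≤ f a := h2 a (Finset.mem_insert_self a s)
    push_cast
    nlinarith [h0 a (Finset.mem_insert_self a s)]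

lemma arcsin_lip (a b : ℝ) (ha : |a| ≤ 0.9) (hb : |b| ≤ 0.9) :
    |Real.arcsin a - Real.arcsin b| ≤ 3 * |a - b| := by
  wlog hab : b ≤ a generalizing a b
  · rw [abs_sub_comm, abs_sub_comm a b]; exact this b a hb ha (le_of_not_ge hab)
  have key : ∀ x ∈ Set.Icc b a, HasDerivWithinAt Real.arcsin
      ((fun y => 1 / Real.sqrt (1 - y ^ 2)) x) (Set.Icc b a) x := by
    intro x hx
    have hx1 : |x| ≤ 0.9 := by
      rw [abs_le] at *
      exact ⟨le_trans hb.1 hx.1, le_trans hx.2 ha.2⟩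
    have : x ≠ -1 := by intro h; rw [h] at hx1; norm_num at hx1
    have h2 : x ≠ 1 := by intro h; rw [h] at hx1; norm_num at hx1
    exact (Real.hasDerivAt_arcsin this h2).hasDerivWithinAt
  have bound : ∀ x ∈ Set.Ico b a, ‖(fun y => 1 / Real.sqrt (1 - y ^ 2)) x‖ ≤ 3 := by
    intro x hx
    have hx1 : |x| ≤ 0.9 := by
      rw [abs_le] at *
      exact ⟨le_trans hb.1 hx.1, le_trans hx.2.le ha.2⟩
    have hsq : x ^ 2 ≤ 0.81 := by nlinarith [abs_le.1 hx1]
    have h19 : (0.19 : ℝ) ≤ 1 - x ^ 2 := by linarith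
    have hs3 : (1/3 : ℝ) ≤ Real.sqrt (1 - x ^ 2) := by
      rw [show (1/3 : ℝ) = Real.sqrt ((1/3)^2) by rw [Real.sqrt_sq]; norm_num]
      apply Real.sqrt_le_sqrt; nlinarith
    rw [Real.norm_eq_abs, abs_of_nonneg (by positivity)]
    rw [div_le_iff₀ (by linarith)]
    linarith
  have := norm_image_sub_le_of_norm_deriv_le_segment' key bound a
    (Set.right_mem_Icc.2 hab)
  rw [Real.norm_eq_abs] at this
  calc |Real.arcsin a - Real.arcsin b| ≤ 3 * (a - b) := this
    _ ≤ 3 * |a - b| := by gcongr; exact le_abs_self _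


/-- The i-th point of the sphere S^{n-1} ⊂ ℝⁿ in spherical coordinates:
u_i = (cos φ_{1i}, sin φ_{1i} cos φ_{2i}, …, sin φ_{1i}⋯sin φ_{i-1,i}, 0, …, 0).
Coordinates are 0-indexed: the k-th coordinate (k : Fin n) corresponds to index k+1. -/
noncomputable def sphVec (n : ℕ) (φ : ℕ → ℕ → ℝ) (i : ℕ) : Fin n → ℝ := fun k =>
  if (k : ℕ) + 1 < i then
    Real.cos (φ ((k : ℕ) + 1) i) * ∏ m ∈ Finset.Icc 1 (k : ℕ), Real.sin (φ m i)
  else if (k : ℕ) + 1 = i then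
    ∏ m ∈ Finset.Icc 1 (k : ℕ), Real.sin (φ m i)
  else 0

/-- α̃_{ij} = √n·(arccos(u_i·u_j) − π/2), where · is the standard inner product on ℝⁿ. -/
noncomputable def alphaTilde (n : ℕ) (φ : ℕ → ℕ → ℝ) (i j : ℕ) : ℝ :=
  Real.sqrt n * (Real.arccos (∑ k : Fin n, sphVec n φ i k * sphVec n φ j k) - Real.pi / 2)

lemma sphVec_sum_eq (n : ℕ) (φ : ℕ → ℕ → ℝ) (i j : ℕ) (hi : 1 ≤ i) (hij : i < j)
    (hj : j ≤ n) :
    ∑ k : Fin n, sphVec n φ i k * sphVec n φ j k =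
      (∑ k ∈ Finset.range (i-1),
        (Real.cos (φ (k+1) i) * ∏ m ∈ Finset.Icc 1 k, Real.sin (φ m i)) *
        (Real.cos (φ (k+1) j) * ∏ m ∈ Finset.Icc 1 k, Real.sin (φ m j)))
      + (∏ m ∈ Finset.Icc 1 (i-1), Real.sin (φ m i)) *
        (Real.cos (φ i j) * ∏ m ∈ Finset.Icc 1 (i-1), Real.sin (φ m j)) := by
  have h1 : ∑ k : Fin n, sphVec n φ i k * sphVec n φ j k =
      ∑ k ∈ Finset.range n, (fun k : ℕ =>
        (if k + 1 < i then Real.cos (φ (k+1) i) * ∏ m ∈ Finset.Icc 1 k, Real.sin (φ m i)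
         else if k + 1 = i then ∏ m ∈ Finset.Icc 1 k, Real.sin (φ m i) else 0) *
        (if k + 1 < j then Real.cos (φ (k+1) j) * ∏ m ∈ Finset.Icc 1 k, Real.sin (φ m j)
         else if k + 1 = j then ∏ m ∈ Finset.Icc 1 k, Real.sin (φ m j) else 0)) k := by
    unfold sphVec
    exact Fin.sum_univ_eq_sum_range (fun k : ℕ =>
        (if k + 1 < i then Real.cos (φ (k+1) i) * ∏ m ∈ Finset.Icc 1 k, Real.sin (φ m i)
         else if k + 1 = i then ∏ m ∈ Finset.Icc 1 k, Real.sin (φ m i) else 0) *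
        (if k + 1 < j then Real.cos (φ (k+1) j) * ∏ m ∈ Finset.Icc 1 k, Real.sin (φ m j)
         else if k + 1 = j then ∏ m ∈ Finset.Icc 1 k, Real.sin (φ m j) else 0)) n
  rw [h1]
  rw [← Finset.sum_subset (Finset.range_subset_range.2 (le_trans (le_of_lt hij) hj))
    (by
      intro k _ hk
      rw [Finset.mem_range, not_lt] at hk
      have h2 : ¬ (k + 1 < i) := by omega
      have h3 : ¬ (k + 1 = i) := by omega
      simp only [if_neg h2, if_neg h3, zero_mul])]
  obtain ⟨i', rfl⟩ : ∃ i', i = i' + 1 := ⟨i - 1, by omega⟩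
  rw [Finset.sum_range_succ]
  congr 1
  · apply Finset.sum_congr rfl
    intro k hk
    rw [Finset.mem_range] at hk
    rw [if_pos (by omega), if_pos (by omega)]
  · rw [if_neg (by omega), if_pos rfl, if_pos (by omega)]
    simp only [Nat.add_sub_cancel]

lemma bad_case_arith (K s nn NN : ℝ) (hK1 : 1 ≤ K+1) (hs : 0 < s) (hs1 : 1 ≤ s)
    (hss : s * s = nn) (hNpos : 0 < NN) (hcase : nn < 16 * NN * (K+1)^2) :
    ((K+1) + s*(π/2)) * s ≤ 50 * (K+1)^3 * NN := by
  have hpi := Real.pi_le_four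
  have hpi0 := Real.pi_pos
  have hsn : s ≤ nn := by nlinarith
  have h1 : (K+1)*s ≤ (K+1)*nn := by nlinarith
  have h2 : (K+1)*nn ≤ 16*NN*(K+1)^3 := by nlinarith
  have h3 : (π/2)*nn ≤ 2*nn := by nlinarith
  have h4 : 2*nn ≤ 32*NN*(K+1)^3 := by nlinarith
  nlinarith [hNpos, hK1]

set_option maxHeartbeats 1000000 in
/-- if all t_{ij} = √n(φ_{ij} − π/2) lie in [−K−1, K+1], then
|t_{ij} − α̃_{ij}| ≤ A·N/√n for all 1 ≤ i < j ≤ N. -/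
theorem t_close_to_alphaTilde (K : ℝ) (hK : 0 < K) :
    ∃ A : ℝ, 0 < A ∧
      ∀ (n N : ℕ), 2 * (K + 1) ^ 2 < (n : ℝ) → 2 ≤ N → N ≤ n → N ^ 3 ≤ n →
      ∀ φ : ℕ → ℕ → ℝ,
        (∀ a b : ℕ, 1 ≤ a → a < b → b ≤ N → φ a b ∈ Set.Icc 0 Real.pi) →
        (∀ i j : ℕ, 1 ≤ i → i < j → j ≤ N →
          |Real.sqrt n * (φ i j - Real.pi / 2)| ≤ K + 1) →
        ∀ i j : ℕ, 1 ≤ i → i < j → j ≤ N →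
          |Real.sqrt n * (φ i j - Real.pi / 2) - alphaTilde n φ i j|
            ≤ A * (N : ℝ) / Real.sqrt n := by
  refine ⟨50 * (K+1)^3, by positivity, ?_⟩
  intro n N hn hN2 hNn hN3 φ hmem ht i j hi hij hj
  have hjn : j ≤ n := le_trans hj hNn
  have hn0 : 0 < n := by omega
  have hn1 : (1:ℝ) ≤ n := by exact_mod_cast hn0
  set s : ℝ := Real.sqrt n with hs_def
  have hs : 0 < s := Real.sqrt_pos.2 (by positivity)
  have hss : s * s = n := Real.mul_self_sqrt (by positivity)
  have hs1 : 1 ≤ s := by nlinarith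
  have hK1 : (1:ℝ) ≤ K + 1 := by linarith
  have hNpos : (0:ℝ) < N := by exact_mod_cast (by omega : 0 < N)
  -- cosine bound
  have cb : ∀ a b : ℕ, 1 ≤ a → a < b → b ≤ N → |Real.cos (φ a b)| ≤ (K+1)/s := by
    intro a b h1 h2 h3
    have h4 := ht a b h1 h2 h3
    rw [abs_mul, abs_of_nonneg hs.le] at h4
    have h5 : |φ a b - π/2| ≤ (K+1)/s := by
      rw [le_div_iff₀ hs, mul_comm]; exact h4
    calc |Real.cos (φ a b)| = |Real.sin (π/2 - φ a b)| := by rw [Real.sin_pi_div_two_sub]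
      _ ≤ |π/2 - φ a b| := Real.abs_sin_le_abs
      _ = |φ a b - π/2| := abs_sub_comm _ _
      _ ≤ (K+1)/s := h5
  -- sine bounds
  have sb : ∀ a b : ℕ, 1 ≤ a → a < b → b ≤ N →
      1 - (K+1)^2/(2*n) ≤ Real.sin (φ a b) ∧ 0 ≤ Real.sin (φ a b) ∧ Real.sin (φ a b) ≤ 1 := by
    intro a b h1 h2 h3
    have h4 := ht a b h1 h2 h3
    have hmem' := hmem a b h1 h2 h3
    refine ⟨?_, Real.sin_nonneg_of_nonneg_of_le_pi hmem'.1 hmem'.2, Real.sin_le_one _⟩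
    have h6 : Real.sin (φ a b) = Real.cos (φ a b - π/2) := by
      rw [← Real.cos_neg, show -(φ a b - π/2) = π/2 - φ a b by ring,
        Real.cos_pi_div_two_sub]
    have h7 : (s * (φ a b - π/2))^2 ≤ (K+1)^2 := by
      nlinarith [abs_nonneg (s * (φ a b - π/2)), sq_abs (s * (φ a b - π/2))]
    have h8 : (n:ℝ) * (φ a b - π/2)^2 ≤ (K+1)^2 := by nlinarith
    have h9 : (φ a b - π/2)^2 ≤ (K+1)^2 / n := by
      rw [le_div_iff₀ (by positivity)]; nlinarith
    have h10 := Real.one_sub_sq_div_two_le_cos (x := φ a b - π/2)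
    rw [h6]
    have : (K+1)^2/(2*n) = ((K+1)^2/n)/2 := by ring
    rw [this]
    linarith
  set cB : ℝ := (K+1)/s with hcB_def
  have hcB0 : 0 ≤ cB := by positivity
  have hcB2 : cB^2 = (K+1)^2/n := by
    rw [hcB_def, div_pow]; congr 1; rw [sq]; exact hss
  have hKs : K + 1 ≤ s := by
    rw [hs_def]
    exact Real.le_sqrt_of_sq_le (by nlinarith)
  have hcB1 : cB ≤ 1 := by rw [hcB_def, div_le_one hs]; linarith
  set D : ℝ := N * (K+1)^2 / n with hD_def
  have hD0 : 0 ≤ D := by positivity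
  -- the sum decomposition
  have hsum := sphVec_sum_eq n φ i j hi hij hjn
  set S : ℝ := ∑ k : Fin n, sphVec n φ i k * sphVec n φ j k with hS_def
  set T : ℝ := ∑ k ∈ Finset.range (i-1),
        (Real.cos (φ (k+1) i) * ∏ m ∈ Finset.Icc 1 k, Real.sin (φ m i)) *
        (Real.cos (φ (k+1) j) * ∏ m ∈ Finset.Icc 1 k, Real.sin (φ m j)) with hT_def
  set P1 : ℝ := ∏ m ∈ Finset.Icc 1 (i-1), Real.sin (φ m i) with hP1_def
  set P2 : ℝ := ∏ m ∈ Finset.Icc 1 (i-1), Real.sin (φ m j) with hP2_def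
  -- bound on T
  have hiN : (i:ℝ) - 1 ≤ N := by
    have : i ≤ N := le_trans (le_of_lt hij) hj
    have : (i:ℝ) ≤ N := by exact_mod_cast this
    linarith
  have hT : |T| ≤ D := by
    have hterm : ∀ k ∈ Finset.range (i-1),
        |(Real.cos (φ (k+1) i) * ∏ m ∈ Finset.Icc 1 k, Real.sin (φ m i)) *
        (Real.cos (φ (k+1) j) * ∏ m ∈ Finset.Icc 1 k, Real.sin (φ m j))| ≤ (K+1)^2/n := by
      intro k hk
      rw [Finset.mem_range] at hk
      have hk1i : k + 1 < i := by omega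
      have hQ1 : ∀ m ∈ Finset.Icc 1 k, 0 ≤ Real.sin (φ m i) ∧ Real.sin (φ m i) ≤ 1 := by
        intro m hm
        rw [Finset.mem_Icc] at hm
        have := sb m i hm.1 (by omega) (le_trans (le_of_lt hij) hj)
        exact ⟨this.2.1, this.2.2⟩
      have hQ2 : ∀ m ∈ Finset.Icc 1 k, 0 ≤ Real.sin (φ m j) ∧ Real.sin (φ m j) ≤ 1 := by
        intro m hm
        rw [Finset.mem_Icc] at hm
        have := sb m j hm.1 (by omega) hj
        exact ⟨this.2.1, this.2.2⟩
      have h1 : |∏ m ∈ Finset.Icc 1 k, Real.sin (φ m i)| ≤ 1 := by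
        rw [abs_of_nonneg (Finset.prod_nonneg (fun m hm => (hQ1 m hm).1))]
        exact Finset.prod_le_one (fun m hm => (hQ1 m hm).1) (fun m hm => (hQ1 m hm).2)
      have h2 : |∏ m ∈ Finset.Icc 1 k, Real.sin (φ m j)| ≤ 1 := by
        rw [abs_of_nonneg (Finset.prod_nonneg (fun m hm => (hQ2 m hm).1))]
        exact Finset.prod_le_one (fun m hm => (hQ2 m hm).1) (fun m hm => (hQ2 m hm).2)
      have hc1 : |Real.cos (φ (k+1) i)| ≤ cB := cb (k+1) i (by omega) hk1i
        (le_trans (le_of_lt hij) hj)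
      have hc2 : |Real.cos (φ (k+1) j)| ≤ cB := cb (k+1) j (by omega) (by omega) hj
      rw [abs_mul, abs_mul, abs_mul, ← hcB2]
      calc |Real.cos (φ (k+1) i)| * |∏ m ∈ Finset.Icc 1 k, Real.sin (φ m i)| *
            (|Real.cos (φ (k+1) j)| * |∏ m ∈ Finset.Icc 1 k, Real.sin (φ m j)|)
          ≤ cB * 1 * (cB * 1) :=
            mul_le_mul (mul_le_mul hc1 h1 (abs_nonneg _) hcB0)
              (mul_le_mul hc2 h2 (abs_nonneg _) hcB0) (by positivity) (by positivity)
        _ = cB ^ 2 := by ring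
    calc |T| ≤ ∑ k ∈ Finset.range (i-1), (K+1)^2/n :=
          le_trans (Finset.abs_sum_le_sum_abs _ _) (Finset.sum_le_sum hterm)
      _ = (i-1 : ℕ) * ((K+1)^2/n) := by rw [Finset.sum_const, Finset.card_range]; simp
      _ ≤ N * ((K+1)^2/n) := by
          have hcast : ((i-1:ℕ):ℝ) ≤ (N:ℝ) := by exact_mod_cast (by omega : i-1 ≤ N)
          have : (0:ℝ) ≤ (K+1)^2/n := by positivity
          nlinarith
      _ = D := by rw [hD_def]; ring
  -- product lower bound
  have hfact : ∀ m ∈ Finset.Icc 1 (i-1),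
      (0 ≤ Real.sin (φ m i) * Real.sin (φ m j)) ∧ (Real.sin (φ m i) * Real.sin (φ m j) ≤ 1)
      ∧ (1 - (K+1)^2/n ≤ Real.sin (φ m i) * Real.sin (φ m j)) := by
    intro m hm
    rw [Finset.mem_Icc] at hm
    have hmi := sb m i hm.1 (by omega) (le_trans (le_of_lt hij) hj)
    have hmj := sb m j hm.1 (by omega) hj
    have he : (0:ℝ) ≤ (K+1)^2/(2*n) := by positivity
    have hee : (K+1)^2/(n:ℝ) = 2*((K+1)^2/(2*(n:ℝ))) := by
      field_simp
      try ring
    refine ⟨mul_nonneg hmi.2.1 hmj.2.1, mul_le_one₀ hmi.2.2 hmj.2.1 hmj.2.2, ?_⟩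
    rw [hee]
    nlinarith [hmi.1, hmj.1, hmi.2.1, hmj.2.1, hmi.2.2, hmj.2.2]
  have hrwP : P1 * P2 = ∏ m ∈ Finset.Icc 1 (i-1), Real.sin (φ m i) * Real.sin (φ m j) := by
    rw [hP1_def, hP2_def, Finset.prod_mul_distrib]
  have hPa : 1 - D ≤ P1 * P2 := by
    rw [hrwP]
    have hlow := prod_lower_aux (Finset.Icc 1 (i-1))
      (fun m => Real.sin (φ m i) * Real.sin (φ m j)) ((K+1)^2/n) (by positivity)
      (fun m hm => (hfact m hm).1) (fun m hm => (hfact m hm).2.1)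
      (fun m hm => (hfact m hm).2.2)
    have hcard : (Finset.Icc 1 (i-1)).card = i - 1 := by rw [Nat.card_Icc]; omega
    rw [hcard] at hlow
    have hcast : ((i-1:ℕ):ℝ) ≤ (N:ℝ) := by exact_mod_cast (by omega : i-1 ≤ N)
    have : ((i-1:ℕ):ℝ) * ((K+1)^2/n) ≤ N * ((K+1)^2/n) := by
      have : (0:ℝ) ≤ (K+1)^2/n := by positivity
      nlinarith
    rw [hD_def]
    calc 1 - N * (K+1)^2 / n ≤ 1 - ((i-1:ℕ):ℝ) * ((K+1)^2/n) := by
          rw [show (N:ℝ) * (K+1)^2 / n = (N:ℝ) * ((K+1)^2/n) by ring]; linarith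
      _ ≤ _ := hlow
  have hPb : P1 * P2 ≤ 1 := by
    rw [hrwP]
    exact Finset.prod_le_one (fun m hm => (hfact m hm).1) (fun m hm => (hfact m hm).2.1)
  -- distance from S to cos
  have hcphi : |Real.cos (φ i j)| ≤ cB := cb i j hi hij hj
  have hScos : |S - Real.cos (φ i j)| ≤ 2 * D := by
    have hrw : S - Real.cos (φ i j) = T + Real.cos (φ i j) * (P1 * P2 - 1) := by
      rw [hsum]; ring
    have h1 : |P1 * P2 - 1| ≤ D := by
      rw [abs_sub_comm, abs_of_nonneg (by linarith)]
      linarith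
    have hcphi1 : |Real.cos (φ i j)| ≤ 1 := le_trans hcphi hcB1
    calc |S - Real.cos (φ i j)| = |T + Real.cos (φ i j) * (P1 * P2 - 1)| := by rw [hrw]
      _ ≤ |T| + |Real.cos (φ i j) * (P1 * P2 - 1)| := abs_add_le _ _
      _ = |T| + |Real.cos (φ i j)| * |P1 * P2 - 1| := by rw [abs_mul]
      _ ≤ D + 1 * D := add_le_add hT
          (mul_le_mul hcphi1 h1 (abs_nonneg _) zero_le_one)
      _ = 2 * D := by ring
  clear_value s cB D S T P1 P2
  clear hfact hrwP hsum hT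
  by_cases hcase : 16 * (N:ℝ) * (K+1)^2 ≤ (n:ℝ)
  · -- main case: n large, use arcsin Lipschitz bound
    have hD16 : D ≤ 1/16 := by
      rw [hD_def, div_le_iff₀ (by positivity : (0:ℝ) < n)]
      nlinarith
    have hcBsq : cB^2 ≤ 1/2 := by
      rw [hcB2, div_le_iff₀ (by positivity : (0:ℝ) < n)]
      linarith
    have hcB34 : cB ≤ 0.75 := by nlinarith
    have hcos : |Real.cos (φ i j)| ≤ 0.75 := le_trans hcphi hcB34
    have hS9 : |S| ≤ 0.9 := by
      have := abs_sub_abs_le_abs_sub S (Real.cos (φ i j))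
      linarith
    have hmem' := hmem i j hi hij hj
    have harccos : Real.arcsin (Real.cos (φ i j)) = π/2 - φ i j := by
      rw [← Real.sin_pi_div_two_sub]
      exact Real.arcsin_sin (by linarith [hmem'.2]) (by linarith [hmem'.1])
    have hkey : s * (φ i j - π/2) - alphaTilde n φ i j
        = s * (Real.arcsin S - Real.arcsin (Real.cos (φ i j))) := by
      simp only [alphaTilde]
      rw [Real.arccos_eq_pi_div_two_sub_arcsin, ← hS_def, ← hs_def, harccos]
      ring
    rw [hkey, abs_mul, abs_of_nonneg hs.le]
    have hlip := arcsin_lip S (Real.cos (φ i j)) hS9 (by linarith)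
    have h6D : |Real.arcsin S - Real.arcsin (Real.cos (φ i j))| ≤ 6 * D := by
      calc |Real.arcsin S - Real.arcsin (Real.cos (φ i j))|
          ≤ 3 * |S - Real.cos (φ i j)| := hlip
        _ ≤ 3 * (2 * D) := by linarith
        _ = 6 * D := by ring
    calc s * |Real.arcsin S - Real.arcsin (Real.cos (φ i j))| ≤ s * (6 * D) :=
          mul_le_mul_of_nonneg_left h6D hs.le
      _ ≤ 50 * (K+1)^3 * N / s := by
          rw [le_div_iff₀ hs]
          have hexp : s * (6 * D) * s = 6 * N * (K+1)^2 * (s*s) / n := by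
            rw [hD_def]; ring
          rw [hexp, hss]
          have hnne : (n:ℝ) ≠ 0 := by positivity
          rw [mul_div_assoc, div_self hnne, mul_one]
          have hstep : 6*(K+1)^2 ≤ 50*(K+1)^3 := by nlinarith [sq_nonneg (K+1)]
          nlinarith [mul_le_mul_of_nonneg_left hstep hNpos.le]
  · -- degenerate case: n small, use trivial bounds
    push_neg at hcase
    have htij := ht i j hi hij hj
    have halpha : |alphaTilde n φ i j| ≤ s * (π/2) := by
      simp only [alphaTilde]
      rw [← hS_def, ← hs_def, abs_mul, abs_of_nonneg hs.le]
      have h1 := Real.arccos_nonneg S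
      have h2 := Real.arccos_le_pi S
      have h3 : |Real.arccos S - π/2| ≤ π/2 := abs_le.2 ⟨by linarith, by linarith⟩
      exact mul_le_mul_of_nonneg_left h3 hs.le
    have htri : |s * (φ i j - π/2) - alphaTilde n φ i j| ≤ (K+1) + s*(π/2) :=
      le_trans (abs_sub (s * (φ i j - π/2)) (alphaTilde n φ i j))
        (add_le_add htij halpha)
    refine le_trans htri ?_
    rw [le_div_iff₀ hs]
    exact bad_case_arith K s n N hK1 hs hs1 hss hNpos hcase
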